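/- Let α > 1, K ≥ 2 an integer, i* ∈ {1,…,K}, and λ ∈ [0,∞)^K with ∑_{j≠i*} (2^{1/α}+λ_j)^{-α} > 1/2. Then ∫_1^∞ α (z+λ_{i*})^{-(α+1)} ∏_{j≠i*} (1 − (z+λ_j)^{-α}) dz ≤ (1 + e^{-1/2})/2. -/

import Mathlib

open MeasureTheory Real Set

lemma aux_hasDerivAt (α l x : ℝ) (hx : 0 < x + l) :
    HasDerivAt (fun z => -(z + l) ^ (-α)) (α * (x + l) ^ (-(α + 1))) x := by
  have h1 : HasDerivAt (fun z : ℝ => z + l) 1 x := (hasDerivAt_id x).add_const l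
  have h2 : HasDerivAt (fun y : ℝ => y ^ (-α)) ((-α) * (x + l) ^ (-α - 1)) (x + l) :=
    Real.hasDerivAt_rpow_const (Or.inl hx.ne')
  have h3 := (h2.comp x h1).neg
  convert h3 using 1
  · rfl
  · rfl
  · rfl
  ring_nf

lemma aux_tendsto (α l : ℝ) (hα : 1 < α) :
    Filter.Tendsto (fun z : ℝ => -(z + l) ^ (-α)) Filter.atTop (nhds 0) := by
  rw [show (0:ℝ) = -0 by ring]
  refine Filter.Tendsto.neg ?_
  have h1 : Filter.Tendsto (fun z : ℝ => z + l) Filter.atTop Filter.atTop :=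
    Filter.tendsto_atTop_add_const_right _ l Filter.tendsto_id
  exact (tendsto_rpow_neg_atTop (by linarith)).comp h1

lemma aux_integrable (α : ℝ) (hα : 1 < α) (l a : ℝ) (hl : 0 ≤ l) (ha : 1 ≤ a) :
    IntegrableOn (fun z => α * (z + l) ^ (-(α + 1))) (Set.Ioi a) := by
  have hpos : ∀ x ∈ Ici a, (0:ℝ) < x + l := fun x hx => by
    have : (1:ℝ) ≤ x := ha.trans hx; linarith
  refine integrableOn_Ioi_deriv_of_nonneg' (g := fun z => -(z + l) ^ (-α)) (l := 0)
    (fun x hx => aux_hasDerivAt α l x (hpos x hx)) (fun x hx => ?_) (aux_tendsto α l hα)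
  have := hpos x (Ioi_subset_Ici_self hx)
  positivity

lemma aux_integral (α : ℝ) (hα : 1 < α) (l a : ℝ) (hl : 0 ≤ l) (ha : 1 ≤ a) :
    ∫ z in Set.Ioi a, α * (z + l) ^ (-(α + 1)) = (a + l) ^ (-α) := by
  have hpos : ∀ x ∈ Ici a, (0:ℝ) < x + l := fun x hx => by
    have : (1:ℝ) ≤ x := ha.trans hx; linarith
  rw [integral_Ioi_of_hasDerivAt_of_nonneg' (g := fun z => -(z + l) ^ (-α)) (l := 0)
    (fun x hx => aux_hasDerivAt α l x (hpos x hx))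
    (fun x hx => by have := hpos x (Ioi_subset_Ici_self hx); positivity) (aux_tendsto α l hα)]
  ring

set_option maxHeartbeats 1000000 in
/-- on the complement `D_t^c`, the FTPL exploitation probability of the
arm `i*` is at most `(1+e^{-1/2})/2`. -/
theorem ftpl_pareto_prob_upper_bound_on_Dtc
    (α : ℝ) (hα : 1 < α) (K : ℕ) (hK : 2 ≤ K) (istar : Fin K)
    (lam : Fin K → ℝ) (hlam : ∀ j, 0 ≤ lam j)
    (hDc : 1 / 2 < ∑ j ∈ Finset.univ.erase istar, ((2 : ℝ) ^ (1 / α) + lam j) ^ (-α)) :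
    (∫ z in Set.Ioi (1 : ℝ),
        α * (z + lam istar) ^ (-(α + 1)) *
          ∏ j ∈ Finset.univ.erase istar, (1 - (z + lam j) ^ (-α)))
      ≤ (1 + Real.exp (-(1 / 2))) / 2 := by
  set c : ℝ := (2 : ℝ) ^ (1 / α) with hc
  have hα0 : (0:ℝ) < α := by linarith
  have hc1 : 1 < c := Real.one_lt_rpow_iff_of_pos (by norm_num) |>.2 (Or.inl ⟨by norm_num, by positivity⟩)
  have hcα : c ^ (-α) = 1 / 2 := by
    rw [hc, ← Real.rpow_mul (by norm_num)]
    rw [show (1 / α) * (-α) = -1 by field_simp]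
    rw [Real.rpow_neg_one]
    norm_num
  set l : ℝ := lam istar with hl
  have hl0 : 0 ≤ l := hlam istar
  set g : ℝ → ℝ := fun z => α * (z + l) ^ (-(α + 1)) with hg
  set P : ℝ → ℝ := fun z => ∏ j ∈ Finset.univ.erase istar, (1 - (z + lam j) ^ (-α)) with hP
  -- basic pointwise facts
  have hP01 : ∀ z : ℝ, 1 ≤ z → 0 ≤ P z ∧ P z ≤ 1 := by
    intro z hz
    have hfac : ∀ j ∈ Finset.univ.erase istar, 0 ≤ 1 - (z + lam j) ^ (-α) ∧
        1 - (z + lam j) ^ (-α) ≤ 1 := by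
      intro j _
      have h1 : (1:ℝ) ≤ z + lam j := by have := hlam j; linarith
      have h2 : (z + lam j) ^ (-α) ≤ 1 :=
        Real.rpow_le_one_of_one_le_of_nonpos h1 (by linarith)
      have h3 : (0:ℝ) ≤ (z + lam j) ^ (-α) := Real.rpow_nonneg (by linarith) _
      constructor <;> linarith
    constructor
    · exact Finset.prod_nonneg fun j hj => (hfac j hj).1
    · exact Finset.prod_le_one (fun j hj => (hfac j hj).1) (fun j hj => (hfac j hj).2)
  have hg0 : ∀ z : ℝ, 1 ≤ z → 0 ≤ g z := by
    intro z hz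
    have : (0:ℝ) < z + l := by linarith
    positivity
  -- measurability / integrability
  have hgi1 : IntegrableOn g (Ioi 1) := aux_integrable α hα l 1 hl0 le_rfl
  have hgic : IntegrableOn g (Ioi c) := aux_integrable α hα l c hl0 hc1.le
  have hgiIoc : IntegrableOn g (Ioc 1 c) := hgi1.mono_set Ioc_subset_Ioi_self
  have hmeas : Measurable fun z : ℝ => g z * P z := by
    apply Measurable.mul
    · exact measurable_const.mul ((measurable_id.add_const l).pow_const _)
    · exact Finset.measurable_prod _ fun j _ =>
        (measurable_const.sub ((measurable_id.add_const (lam j)).pow_const _))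
  have hfi1 : IntegrableOn (fun z => g z * P z) (Ioi 1) := by
    refine Integrable.mono' hgi1 hmeas.aestronglyMeasurable ?_
    filter_upwards [ae_restrict_mem measurableSet_Ioi] with z hz
    have hz1 : (1:ℝ) ≤ z := le_of_lt hz
    have h := hP01 z hz1
    rw [Real.norm_eq_abs, abs_of_nonneg (mul_nonneg (hg0 z hz1) h.1)]
    nlinarith [hg0 z hz1]
  have hfiIoc : IntegrableOn (fun z => g z * P z) (Ioc 1 c) := hfi1.mono_set Ioc_subset_Ioi_self
  have hfic : IntegrableOn (fun z => g z * P z) (Ioi c) :=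
    hfi1.mono_set (Ioi_subset_Ioi hc1.le)
  -- split the integral
  have hsplit : (∫ z in Ioi (1:ℝ), g z * P z) =
      (∫ z in Ioc 1 c, g z * P z) + ∫ z in Ioi c, g z * P z := by
    rw [← setIntegral_union (Set.Ioc_disjoint_Ioi le_rfl) measurableSet_Ioi hfiIoc hfic,
      Set.Ioc_union_Ioi_eq_Ioi hc1.le]
  have hgsplit : (∫ z in Ioi (1:ℝ), g z) = (∫ z in Ioc 1 c, g z) + ∫ z in Ioi c, g z := by
    rw [← setIntegral_union (Set.Ioc_disjoint_Ioi le_rfl) measurableSet_Ioi hgiIoc hgic,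
      Set.Ioc_union_Ioi_eq_Ioi hc1.le]
  -- bound on Ioc 1 c : P z ≤ exp (-(1/2))
  have hPle : ∀ z ∈ Ioc (1:ℝ) c, P z ≤ Real.exp (-(1/2)) := by
    intro z hz
    have hz1 : (1:ℝ) < z := hz.1
    have hzc : z ≤ c := hz.2
    have step1 : P z ≤ ∏ j ∈ Finset.univ.erase istar, Real.exp (-(z + lam j) ^ (-α)) := by
      refine Finset.prod_le_prod (fun j _ => ?_) (fun j _ => ?_)
      · have h1 : (1:ℝ) ≤ z + lam j := by have := hlam j; linarith
        have h2 : (z + lam j) ^ (-α) ≤ 1 :=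
          Real.rpow_le_one_of_one_le_of_nonpos h1 (by linarith)
        linarith
      · have := Real.add_one_le_exp (-(z + lam j) ^ (-α))
        linarith
    rw [← Real.exp_sum] at step1
    refine step1.trans (Real.exp_le_exp.2 ?_)
    have hsum : ∑ j ∈ Finset.univ.erase istar, (c + lam j) ^ (-α) ≤
        ∑ j ∈ Finset.univ.erase istar, (z + lam j) ^ (-α) := by
      refine Finset.sum_le_sum fun j _ => ?_
      have h1 : (0:ℝ) < z + lam j := by have := hlam j; linarith
      exact Real.rpow_le_rpow_of_nonpos h1 (by linarith [hlam j]) (by linarith)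
    rw [Finset.sum_neg_distrib]
    linarith
  -- bound pieces
  have hIoc : (∫ z in Ioc (1:ℝ) c, g z * P z) ≤
      Real.exp (-(1/2)) * ∫ z in Ioc (1:ℝ) c, g z := by
    rw [← integral_const_mul]
    refine setIntegral_mono_on hfiIoc (hgiIoc.const_mul _) measurableSet_Ioc fun z hz => ?_
    have := hPle z hz
    have hgz := hg0 z hz.1.le
    nlinarith
  have hIoi : (∫ z in Ioi c, g z * P z) ≤ ∫ z in Ioi c, g z := by
    refine setIntegral_mono_on hfic hgic measurableSet_Ioi fun z hz => ?_
    have hz1 : (1:ℝ) ≤ z := le_of_lt (hc1.trans hz)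
    have h := hP01 z hz1
    nlinarith [hg0 z hz1]
  -- computed values
  have hval1 : (∫ z in Ioi (1:ℝ), g z) = (1 + l) ^ (-α) := aux_integral α hα l 1 hl0 le_rfl
  have hvalc : (∫ z in Ioi c, g z) = (c + l) ^ (-α) := aux_integral α hα l c hl0 hc1.le
  have hIocval : (∫ z in Ioc (1:ℝ) c, g z) = (1 + l) ^ (-α) - (c + l) ^ (-α) := by
    have := hgsplit
    rw [hval1, hvalc] at this
    linarith
  -- numeric bounds
  have hq : (c + l) ^ (-α) ≤ 1 / 2 := by
    rw [← hcα]
    exact Real.rpow_le_rpow_of_nonpos (by linarith) (by linarith) (by linarith)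
  have hpq : (c + l) ^ (-α) ≤ (1 + l) ^ (-α) :=
    Real.rpow_le_rpow_of_nonpos (by linarith) (by linarith) (by linarith)
  have hp1 : (1 + l) ^ (-α) ≤ 1 :=
    Real.rpow_le_one_of_one_le_of_nonpos (by linarith) (by linarith)
  have he0 : 0 < Real.exp (-(1/2)) := Real.exp_pos _
  have he1 : Real.exp (-(1/2)) < 1 := by
    rw [Real.exp_lt_one_iff]; norm_num
  calc (∫ z in Ioi (1:ℝ), g z * P z)
      = (∫ z in Ioc 1 c, g z * P z) + ∫ z in Ioi c, g z * P z := hsplit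
    _ ≤ Real.exp (-(1/2)) * ((1 + l) ^ (-α) - (c + l) ^ (-α)) + (c + l) ^ (-α) := by
        rw [← hIocval, ← hvalc]; exact add_le_add hIoc hIoi
    _ ≤ (1 + Real.exp (-(1/2))) / 2 := by nlinarith
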